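/- Let Σ ∈ ℝ^{k×k} be symmetric positive definite, M = -diag(Σ)/2 ∈ ℝ^k, and let φ_{M,Σ} be the corresponding Gaussian density. Then the measure on ℝ^{k+1} with density μ(dx₀,…,dx_k) = e^{-x₀} φ_{M',Σ}(x₁ - x₀, …, x_k - x₀) dx₀…dx_k, where M' = (-2λ²_{1,0},…,-2λ²_{k,0}) with λ²_{i,0} = Σ_{ii}/4, assigns measure 1 to the set A₁ = {x ∈ ℝ^{k+1} : x₀ > 0}, and the image of μ restricted to A₁ under the increment map x ↦ (x₁ - x₀, …, x_k - x₀) is the Gaussian measure N(M', Σ). -/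

import Mathlib

open Real MeasureTheory Matrix Finset

/-- Density of the k-variate normal distribution with mean `M` and covariance `S`. -/
noncomputable def gaussDensity (k : ℕ) (M : Fin k → ℝ) (S : Matrix (Fin k) (Fin k) ℝ)
    (y : Fin k → ℝ) : ℝ :=
  (Real.sqrt ((2 * Real.pi) ^ k * S.det))⁻¹ *
    Real.exp (-(1 / 2) * ((y - M) ⬝ᵥ S⁻¹.mulVec (y - M)))

/-- The k-variate Gaussian measure `N(M, S)` on `Fin k → ℝ`. -/
noncomputable def gaussMeasure (k : ℕ) (M : Fin k → ℝ) (S : Matrix (Fin k) (Fin k) ℝ) :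
    Measure (Fin k → ℝ) :=
  volume.withDensity (fun y => ENNReal.ofReal (gaussDensity k M S y))

/-- Hüsler-Reiss exponent measure in increment form: density
`e^{-x₀} φ_{M',Σ}(x₁-x₀, …, x_k-x₀)`. -/
noncomputable def HRexpMeasureMulti (k : ℕ) (S : Matrix (Fin k) (Fin k) ℝ) :
    Measure (Fin (k + 1) → ℝ) :=
  volume.withDensity (fun x => ENNReal.ofReal
    (Real.exp (-(x 0)) *
      gaussDensity k (fun i => -(S i i) / 2) S (fun i => x i.succ - x 0)))

lemma continuous_gaussDensity (k : ℕ) (M : Fin k → ℝ) (S : Matrix (Fin k) (Fin k) ℝ) :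
    Continuous (gaussDensity k M S) := by
  unfold gaussDensity
  refine continuous_const.mul (Real.continuous_exp.comp (continuous_const.mul ?_))
  unfold dotProduct Matrix.mulVec dotProduct
  continuity

lemma gaussDensity_nonneg (k : ℕ) (M : Fin k → ℝ) (S : Matrix (Fin k) (Fin k) ℝ) (y : Fin k → ℝ) :
    0 ≤ gaussDensity k M S y := by
  refine mul_nonneg (inv_nonneg.2 (Real.sqrt_nonneg _)) (Real.exp_nonneg _)

lemma lintegral_gaussDensity (k : ℕ) (M : Fin k → ℝ) {S : Matrix (Fin k) (Fin k) ℝ}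
    (hS : S.PosDef) : ∫⁻ y, ENNReal.ofReal (gaussDensity k M S y) = 1 := by
  open scoped MatrixOrder in set A := CFC.sqrt S with hA
  have hAA : A * A = S := by open scoped MatrixOrder in exact CFC.sqrt_mul_sqrt_self S hS.posSemidef.nonneg
  have hAsym : Aᵀ = A := by
    have : A.IsHermitian := by open scoped MatrixOrder in exact (CFC.sqrt_nonneg S).posSemidef.1
    rwa [IsHermitian, conjTranspose_eq_transpose_of_trivial] at this
  have hdetS : 0 < S.det := hS.det_pos
  have hdetA2 : A.det ^ 2 = S.det := by rw [sq, ← det_mul, hAA]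
  have hdetA0 : A.det ≠ 0 := by
    intro h; rw [h] at hdetA2; simp at hdetA2; linarith
  have hdetA : IsUnit A.det := hdetA0.isUnit
  have habs : |A.det| = Real.sqrt S.det := by
    rw [← hdetA2, Real.sqrt_sq_eq_abs]
  have hinv : A * (S⁻¹ * A) = 1 := by
    rw [← hAA, Matrix.mul_inv_rev, ← Matrix.mul_assoc, ← Matrix.mul_assoc,
      Matrix.mul_nonsing_inv A hdetA, Matrix.one_mul, Matrix.nonsing_inv_mul A hdetA]
  have hquad : ∀ z : Fin k → ℝ, (A.mulVec z) ⬝ᵥ S⁻¹.mulVec (A.mulVec z) = z ⬝ᵥ z := by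
    intro z
    rw [Matrix.mulVec_mulVec, Matrix.dotProduct_mulVec]
    nth_rewrite 1 [← hAsym]
    rw [← Matrix.vecMul_transpose, Matrix.transpose_transpose, Matrix.vecMul_vecMul, hinv,
      Matrix.vecMul_one]
  set c := Real.sqrt ((2 * Real.pi) ^ k * S.det) with hc
  have hc0 : 0 < c := Real.sqrt_pos.2 (by positivity)
  set f : ℝ → ℝ := fun x => Real.exp (-(1/2) * (x * x)) with hf
  have hfint : Integrable f := by
    simpa [hf, ← pow_two] using integrable_exp_neg_mul_sq (by norm_num : (0:ℝ) < 1/2)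
  have hfi : ∫ x, f x = Real.sqrt (2 * Real.pi) := by
    have := integral_gaussian (1/2)
    simp only [hf, ← pow_two]
    rw [this]
    rw [show π / (1/2) = 2 * π by ring]
  have hGmeas : Measurable fun y : Fin k → ℝ => ENNReal.ofReal (gaussDensity k 0 S y) :=
    ((continuous_gaussDensity k 0 S).measurable).ennreal_ofReal
  have h1 : ∫⁻ y, ENNReal.ofReal (gaussDensity k M S y)
      = ∫⁻ y, ENNReal.ofReal (gaussDensity k 0 S y) := by
    rw [← lintegral_add_right_eq_self
      (fun y => ENNReal.ofReal (gaussDensity k M S y)) M]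
    congr 1; funext y
    simp [gaussDensity, add_sub_cancel_right]
  have hmapA : Measure.map (Matrix.toLin' A) volume
      = ENNReal.ofReal |A.det⁻¹| • volume :=
    Real.map_matrix_volume_pi_eq_smul_volume_pi hdetA0
  have h2 : ∫⁻ z, ENNReal.ofReal (gaussDensity k 0 S (Matrix.toLin' A z))
      = ENNReal.ofReal |A.det⁻¹| * ∫⁻ y, ENNReal.ofReal (gaussDensity k 0 S y) := by
    rw [← lintegral_map hGmeas (Matrix.toLin' A).continuous_of_finiteDimensional.measurable,
      hmapA, lintegral_smul_measure, smul_eq_mul]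
  have h4 : ∀ z : Fin k → ℝ, gaussDensity k 0 S (Matrix.toLin' A z)
      = c⁻¹ * ∏ i, f (z i) := by
    intro z
    rw [gaussDensity, Matrix.toLin'_apply, sub_zero, hquad]
    congr 1
    rw [dotProduct, Finset.mul_sum, Real.exp_sum]
  have h5 : ∫⁻ z, ENNReal.ofReal (gaussDensity k 0 S (Matrix.toLin' A z))
      = ENNReal.ofReal c⁻¹ * ENNReal.ofReal (Real.sqrt (2 * Real.pi) ^ k) := by
    simp_rw [h4]
    have : ∀ z : Fin k → ℝ, ENNReal.ofReal (c⁻¹ * ∏ i, f (z i))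
        = ENNReal.ofReal c⁻¹ * ENNReal.ofReal (∏ i, f (z i)) := fun z =>
      ENNReal.ofReal_mul (by positivity)
    simp_rw [this]
    rw [lintegral_const_mul' _ _ ENNReal.ofReal_ne_top]
    congr 1
    rw [volume_pi]
    rw [← ofReal_integral_eq_lintegral_ofReal (Integrable.fintype_prod fun _ => hfint)
      (Filter.Eventually.of_forall fun z => Finset.prod_nonneg fun i _ => (Real.exp_nonneg _))]
    rw [MeasureTheory.integral_fintype_prod_eq_pow (ι := Fin k) f, hfi]
    simp
  -- combine
  have key : ∫⁻ y, ENNReal.ofReal (gaussDensity k 0 S y)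
      = ENNReal.ofReal |A.det| * (ENNReal.ofReal c⁻¹ *
        ENNReal.ofReal (Real.sqrt (2 * Real.pi) ^ k)) := by
    rw [← h5, h2, ← mul_assoc, ← ENNReal.ofReal_mul (abs_nonneg _), ← abs_mul,
      mul_inv_cancel₀ hdetA0, abs_one, ENNReal.ofReal_one, one_mul]
  rw [h1, key, ← ENNReal.ofReal_mul (by positivity : (0:ℝ) ≤ c⁻¹),
    ← ENNReal.ofReal_mul (abs_nonneg _), habs]
  have : √S.det * (c⁻¹ * Real.sqrt (2 * Real.pi) ^ k) = 1 := by
    have h2pi : Real.sqrt ((2 * Real.pi) ^ k) = Real.sqrt (2 * Real.pi) ^ k := by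
      nth_rewrite 1 [← Real.sq_sqrt (by positivity : (0:ℝ) ≤ 2 * Real.pi)]
      rw [← pow_mul, mul_comm 2 k, pow_mul, Real.sqrt_sq (by positivity)]
    rw [hc, Real.sqrt_mul (by positivity), h2pi]
    rw [mul_inv]
    have hs : (0:ℝ) < Real.sqrt (2*Real.pi) ^ k := by positivity
    have hd : (0:ℝ) < Real.sqrt S.det := Real.sqrt_pos.2 hdetS
    field_simp
  rw [this, ENNReal.ofReal_one]

lemma exp_lintegral_Ioi : ∫⁻ t in Set.Ioi (0:ℝ), ENNReal.ofReal (Real.exp (-t)) = 1 := by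
  have hint : IntegrableOn (fun t : ℝ => Real.exp (-t)) (Set.Ioi 0) := by
    simpa using exp_neg_integrableOn_Ioi 0 (by norm_num : (0:ℝ) < 1)
  rw [← ofReal_integral_eq_lintegral_ofReal hint
    (Filter.Eventually.of_forall fun t => Real.exp_nonneg _)]
  rw [integral_exp_neg_Ioi_zero, ENNReal.ofReal_one]

lemma key_lintegral (k : ℕ) (M : Fin k → ℝ) (S : Matrix (Fin k) (Fin k) ℝ)
    {B : Set (Fin k → ℝ)} (hB : MeasurableSet B) :
    ∫⁻ x in {x : Fin (k+1) → ℝ | 0 < x 0} ∩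
        (fun x : Fin (k+1) → ℝ => fun i : Fin k => x i.succ - x 0) ⁻¹' B,
      ENNReal.ofReal (Real.exp (-(x 0)) * gaussDensity k M S (fun i => x i.succ - x 0))
    = ∫⁻ y in B, ENNReal.ofReal (gaussDensity k M S y) := by
  set gD := gaussDensity k M S with hgD
  have hgc : Continuous gD := continuous_gaussDensity k M S
  have hinc : Measurable (fun x : Fin (k+1) → ℝ => fun i : Fin k => x i.succ - x 0) := by
    measurability
  have hset : MeasurableSet ({x : Fin (k+1) → ℝ | 0 < x 0} ∩
      (fun x : Fin (k+1) → ℝ => fun i : Fin k => x i.succ - x 0) ⁻¹' B) :=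
    ((measurable_pi_apply 0) measurableSet_Ioi).inter (hinc hB)
  set K : (Fin k → ℝ) → ENNReal := B.indicator (fun w => ENNReal.ofReal (gD w)) with hK
  have hKmeas : Measurable K := (hgc.measurable.ennreal_ofReal).indicator hB
  set G : ℝ × (Fin k → ℝ) → ENNReal := fun p =>
    (Set.Ioi (0:ℝ)).indicator (fun t => ENNReal.ofReal (Real.exp (-t))) p.1 *
      K (fun i => p.2 i - p.1) with hG
  have hexp : Measurable fun t : ℝ => ENNReal.ofReal (Real.exp (-t)) :=
    (Real.continuous_exp.comp continuous_neg).measurable.ennreal_ofReal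
  have hGmeas : Measurable G := by
    apply Measurable.mul
    · exact (hexp.indicator measurableSet_Ioi).comp measurable_fst
    · refine hKmeas.comp ?_
      refine measurable_pi_lambda _ fun i => ?_
      exact ((measurable_pi_apply i).comp measurable_snd).sub measurable_fst
  have hpt : ∀ x : Fin (k+1) → ℝ,
      Set.indicator ({x : Fin (k+1) → ℝ | 0 < x 0} ∩
        (fun x : Fin (k+1) → ℝ => fun i : Fin k => x i.succ - x 0) ⁻¹' B)
        (fun x => ENNReal.ofReal (Real.exp (-(x 0)) * gD (fun i => x i.succ - x 0))) x
      = G (x 0, fun j => x j.succ) := by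
    intro x
    by_cases h1 : 0 < x 0 <;> by_cases h2 : (fun i : Fin k => x i.succ - x 0) ∈ B <;>
      simp [hG, hK, Set.indicator_apply, h1, h2, Set.mem_Ioi,
        ENNReal.ofReal_mul (Real.exp_nonneg _)]
  rw [← lintegral_indicator hset _]
  calc ∫⁻ x, Set.indicator _ _ x
      = ∫⁻ x : Fin (k+1) → ℝ, G ((MeasurableEquiv.piFinSuccAbove (fun _ => ℝ) 0) x) := by
        congr 1; funext x
        rw [hpt x]
        simp [MeasurableEquiv.piFinSuccAbove, Fin.zero_succAbove]
        rfl
    _ = ∫⁻ p, G p ∂((volume : Measure ℝ).prod (volume : Measure (Fin k → ℝ))) := by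
        have mp := volume_preserving_piFinSuccAbove (fun _ : Fin (k+1) => ℝ) 0
        exact mp.lintegral_comp hGmeas
    _ = ∫⁻ t : ℝ, ∫⁻ y : Fin k → ℝ, G (t, y) := lintegral_prod _ hGmeas.aemeasurable
    _ = ∫⁻ t : ℝ, (Set.Ioi (0:ℝ)).indicator (fun t => ENNReal.ofReal (Real.exp (-t))) t
          * ∫⁻ y, K y := by
        congr 1; funext t
        simp only [hG]
        rw [lintegral_const_mul' _ _ (by
          by_cases h : t ∈ Set.Ioi (0:ℝ) <;> simp [Set.indicator_apply, h])]
        congr 1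
        exact lintegral_sub_right_eq_self K (fun _ => t)
    _ = ∫⁻ y in B, ENNReal.ofReal (gD y) := by
        rw [lintegral_mul_const _ (hexp.indicator measurableSet_Ioi),
          lintegral_indicator measurableSet_Ioi _, exp_lintegral_Ioi, one_mul, hK,
          lintegral_indicator hB _]

/-- The exponent measure assigns mass one to `{x₀ > 0}`, and the image of its restriction
to this set under the increment map is the Gaussian measure `N(M', Σ)` with
`M' = -diag(Σ)/2` (i.e., `M'_i = -2λ²_{i,0}` with `λ²_{i,0} = Σ_{ii}/4`). -/
theorem HRexpMeasureMulti_increments_gaussian (k : ℕ)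
    (S : Matrix (Fin k) (Fin k) ℝ) (hS : S.PosDef) :
    HRexpMeasureMulti k S {x | 0 < x 0} = 1 ∧
    Measure.map (fun x : Fin (k + 1) → ℝ => fun i : Fin k => x i.succ - x 0)
        ((HRexpMeasureMulti k S).restrict {x | 0 < x 0}) =
      gaussMeasure k (fun i => -(S i i) / 2) S := by
  set M : Fin k → ℝ := fun i => -(S i i) / 2 with hM
  have hA1 : MeasurableSet {x : Fin (k+1) → ℝ | 0 < x 0} :=
    (measurable_pi_apply 0) measurableSet_Ioi
  have hinc : Measurable (fun x : Fin (k+1) → ℝ => fun i : Fin k => x i.succ - x 0) := by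
    refine measurable_pi_lambda _ fun i => ?_
    exact (measurable_pi_apply i.succ).sub (measurable_pi_apply 0)
  constructor
  · rw [HRexpMeasureMulti,
      show {x : Fin (k+1) → ℝ | 0 < x 0} = {x : Fin (k+1) → ℝ | 0 < x 0} ∩
        (fun x : Fin (k+1) → ℝ => fun i : Fin k => x i.succ - x 0) ⁻¹' Set.univ by simp,
      withDensity_apply _ (hA1.inter (hinc MeasurableSet.univ)),
      key_lintegral k M S MeasurableSet.univ, Measure.restrict_univ]
    exact lintegral_gaussDensity k M hS
  · ext B hB
    rw [Measure.map_apply hinc hB, Measure.restrict_apply (hinc hB),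
      HRexpMeasureMulti, withDensity_apply _ ((hinc hB).inter hA1), Set.inter_comm,
      key_lintegral k M S hB, gaussMeasure, withDensity_apply _ hB]
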